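/- Let f be a homeomorphism of a compact metric space that is strongly measure expansive with constant δ, and suppose f has the shadowing property. Then for ε = δ/2, every periodic point p satisfies W^s_ε(p) ⊆ W^s(p): if d(f^i(y), f^i(p)) ≤ ε for all i ≥ 0, then d(f^i(y), f^i(p)) → 0 as i → ∞. -/

import Mathlib

open MeasureTheory Filter Metric Topology

variable {X : Type*}

/-- Iterate of a homeomorphism by an integer. -/
noncomputable def zit [TopologicalSpace X] (f : X ≃ₜ X) (i : ℤ) (x : X) : X :=
  (f.toEquiv ^ i) x

/-- The dynamical ball `Γ_δ(x)` of a homeomorphism. -/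
def Gamma [MetricSpace X] (f : X ≃ₜ X) (δ : ℝ) (x : X) : Set X :=
  {y | ∀ i : ℤ, dist (zit f i x) (zit f i y) ≤ δ}

/-- Shadowing property for one-sided (ℕ-indexed) pseudo-orbits. -/
def ShadowingN [MetricSpace X] (f : X → X) : Prop :=
  ∀ ε > (0 : ℝ), ∃ δ > (0 : ℝ), ∀ x : ℕ → X,
    (∀ i, dist (f (x i)) (x (i + 1)) < δ) →
    ∃ y, ∀ i, dist (f^[i] y) (x i) < ε

/-- Shadowing property for two-sided (ℤ-indexed) pseudo-orbits of a homeomorphism. -/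
def ShadowingZ [MetricSpace X] (f : X ≃ₜ X) : Prop :=
  ∀ ε > (0 : ℝ), ∃ δ > (0 : ℝ), ∀ x : ℤ → X,
    (∀ i, dist (f (x i)) (x (i + 1)) < δ) →
    ∃ y, ∀ i, dist (zit f i y) (x i) < ε

/-- Local weak specification property. -/
def LocalWeakSpec [MetricSpace X] (f : X → X) : Prop :=
  ∀ ε > (0 : ℝ), ∃ N : ℕ, ∃ δ > (0 : ℝ), ∀ n, N ≤ n → ∀ (k : ℕ) (x : ℕ → X),
    (∀ i, i + 1 < k → dist (f^[n] (x i)) (x (i + 1)) < δ) →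
    ∃ y, ∀ i < k, ∀ j, i * n ≤ j → j < (i + 1) * n →
      dist (f^[j] y) (f^[j - i * n] (x i)) < ε

/-- Local specification property (tracing point is periodic when the chain closes up). -/
def LocalSpec [MetricSpace X] (f : X → X) : Prop :=
  ∀ ε > (0 : ℝ), ∃ N : ℕ, ∃ δ > (0 : ℝ), ∀ n, N ≤ n → ∀ k, 1 ≤ k → ∀ x : ℕ → X,
    (∀ i < k, dist (f^[n] (x i)) (x ((i + 1) % k)) < δ) →
    ∃ y, f^[k * n] y = y ∧ ∀ i < k, ∀ j, i * n ≤ j → j < (i + 1) * n →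
      dist (f^[j] y) (f^[j - i * n] (x i)) < ε

/-- A point is periodic for `f`. -/
def IsPeriodicPt' (f : X → X) (y : X) : Prop := ∃ m, 1 ≤ m ∧ f^[m] y = y

/-- Periodic shadowing property for one-sided pseudo-orbits. -/
def PeriodicShadowingN [MetricSpace X] (f : X → X) : Prop :=
  ∀ ε > (0 : ℝ), ∃ δ > (0 : ℝ), ∀ x : ℕ → X,
    (∀ i, dist (f (x i)) (x (i + 1)) < δ) →
    (∃ M, 1 ≤ M ∧ ∀ i, x (i + M) = x i) →
    ∃ y, IsPeriodicPt' f y ∧ ∀ i, dist (f^[i] y) (x i) < ε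

/-- Periodic shadowing property for two-sided pseudo-orbits of a homeomorphism. -/
def PeriodicShadowingZ [MetricSpace X] (f : X ≃ₜ X) : Prop :=
  ∀ ε > (0 : ℝ), ∃ δ > (0 : ℝ), ∀ x : ℤ → X,
    (∀ i, dist (f (x i)) (x (i + 1)) < δ) →
    (∃ M : ℕ, 1 ≤ M ∧ ∀ i, x (i + M) = x i) →
    ∃ y, IsPeriodicPt' f y ∧ ∀ i, dist (zit f i y) (x i) < ε

/-- Strong periodic shadowing: the shadowing point has the same period as the pseudo-orbit. -/
def StrongPeriodicShadowingZ [MetricSpace X] (f : X ≃ₜ X) : Prop :=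
  ∀ ε > (0 : ℝ), ∃ δ > (0 : ℝ), ∀ (N : ℕ), 1 ≤ N → ∀ x : ℤ → X,
    (∀ i, dist (f (x i)) (x (i + 1)) < δ) →
    (∀ i, x (i + N) = x i) →
    ∃ y, f^[N] y = y ∧ ∀ i, dist (zit f i y) (x i) < ε

/-- Topological transitivity of a homeomorphism (some point has dense two-sided orbit). -/
def TransitiveZ [TopologicalSpace X] (f : X ≃ₜ X) : Prop :=
  ∃ x : X, Dense (Set.range fun n : ℤ => zit f n x)

/-- Measure expansiveness of a homeomorphism. -/
def MeasExpansive [MetricSpace X] [MeasurableSpace X] (f : X ≃ₜ X) : Prop :=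
  ∃ δ > (0 : ℝ), ∀ μ : Measure X, IsProbabilityMeasure μ →
    MeasurePreserving f μ μ → (∀ z : X, μ {z} = 0) →
    ∀ x : X, μ (Gamma f δ x) = 0

/-- Strong measure expansiveness of a homeomorphism. -/
def StrongMeasExpansive [MetricSpace X] [MeasurableSpace X] (f : X ≃ₜ X) : Prop :=
  ∃ δ > (0 : ℝ), ∀ μ : Measure X, IsProbabilityMeasure μ →
    MeasurePreserving f μ μ → ∀ x : X, μ (Gamma f δ x) = μ {x}

/-- Strong measure expansiveness with a specified constant. -/
def StrongMeasExpansiveWith [MetricSpace X] [MeasurableSpace X] (f : X ≃ₜ X) (δ : ℝ) : Prop :=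
  ∀ μ : Measure X, IsProbabilityMeasure μ →
    MeasurePreserving f μ μ → ∀ x : X, μ (Gamma f δ x) = μ {x}

open scoped ENNReal

set_option linter.unusedSectionVars false

section aux
variable [MetricSpace X]

lemma zit_natCast (f : X ≃ₜ X) (n : ℕ) (x : X) : zit f (n : ℤ) x = (⇑f)^[n] x := by
  have : (⇑f)^[n] x = (⇑f.toEquiv)^[n] x := rfl
  rw [this, Equiv.Perm.iterate_eq_pow]
  simp [zit, zpow_natCast]

lemma zit_add (f : X ≃ₜ X) (i j : ℤ) (x : X) : zit f (i + j) x = zit f i (zit f j x) := by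
  simp [zit, zpow_add, Equiv.Perm.mul_apply]

lemma continuous_zit (f : X ≃ₜ X) (i : ℤ) : Continuous (zit f i) := by
  rcases i with n | n
  · have : zit f (Int.ofNat n) = fun x => (⇑f)^[n] x := by
      funext x; exact zit_natCast f n x
    rw [this]
    exact f.continuous.iterate n
  · have : zit f (Int.negSucc n) = fun x => (⇑f.symm)^[n+1] x := by
      funext x
      have : (⇑f.symm)^[n+1] x = (⇑f.symm.toEquiv)^[n+1] x := rfl
      rw [this, Equiv.Perm.iterate_eq_pow]
      simp only [zit, zpow_negSucc]
      congr 1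
    rw [this]
    exact f.symm.continuous.iterate (n+1)

lemma zit_iterate (f : X ≃ₜ X) (j : ℤ) (n : ℕ) (x : X) (h : 0 ≤ (n : ℤ) + j) :
    zit f j ((⇑f)^[n] x) = (⇑f)^[((n : ℤ) + j).toNat] x := by
  rw [← zit_natCast f n x, ← zit_add]
  rw [← zit_natCast f (((n : ℤ) + j).toNat) x]
  congr 1
  omega

end aux

section aux2
variable [MetricSpace X] [MeasurableSpace X] [BorelSpace X]

lemma map_sum_dirac {g : X → X} (hg : Measurable g) (s : Finset ℕ) (x : ℕ → X) :
    Measure.map g (∑ i ∈ s, Measure.dirac (x i)) = ∑ i ∈ s, Measure.dirac (g (x i)) := by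
  classical
  induction s using Finset.induction with
  | empty => simp
  | insert a s h ih =>
      rw [Finset.sum_insert h, Measure.map_add _ _ hg, Measure.map_dirac' hg, ih,
        Finset.sum_insert h]

lemma periodic_measure (f : X ≃ₜ X) (p : X) (M : ℕ) (hM : 1 ≤ M) (hp : (⇑f)^[M] p = p) :
    ∃ μ : Measure X, IsProbabilityMeasure μ ∧ MeasurePreserving f μ μ ∧
      ∀ r : ℕ, ((M : ℝ≥0∞))⁻¹ ≤ μ {(⇑f)^[r] p} := by
  have hM0 : (M : ℝ≥0∞) ≠ 0 := Nat.cast_ne_zero.mpr (by omega)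
  have hMt : (M : ℝ≥0∞) ≠ ⊤ := ENNReal.natCast_ne_top M
  have hper : Function.IsPeriodicPt (⇑f) M p := hp
  set μ : Measure X := (M : ℝ≥0∞)⁻¹ • ∑ i ∈ Finset.range M, Measure.dirac ((⇑f)^[i] p) with hμ
  have happ : ∀ s : Set X,
      μ s = (M : ℝ≥0∞)⁻¹ * ∑ i ∈ Finset.range M, Measure.dirac ((⇑f)^[i] p) s := by
    intro s
    simp [hμ, Measure.smul_apply, Measure.finset_sum_apply, smul_eq_mul]
  have hprob : IsProbabilityMeasure μ := by
    constructor
    rw [happ]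
    simp [ENNReal.inv_mul_cancel hM0 hMt]
  have hmeas : Measurable (⇑f) := f.continuous.measurable
  have hmap : Measure.map (⇑f) μ = μ := by
    obtain ⟨m, rfl⟩ : ∃ m, M = m + 1 := ⟨M - 1, (Nat.succ_pred_eq_of_pos hM).symm⟩
    rw [hμ, Measure.map_smul, map_sum_dirac hmeas]
    congr 1
    have h1 : ∀ i : ℕ, f ((⇑f)^[i] p) = (⇑f)^[i+1] p := by
      intro i; rw [Function.iterate_succ_apply' (⇑f) i p]
    calc ∑ i ∈ Finset.range (m+1), Measure.dirac (f ((⇑f)^[i] p))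
        = (∑ i ∈ Finset.range m, Measure.dirac ((⇑f)^[i+1] p))
            + Measure.dirac ((⇑f)^[m+1] p) := by
          simp_rw [h1]; rw [Finset.sum_range_succ]
      _ = (∑ i ∈ Finset.range m, Measure.dirac ((⇑f)^[i+1] p))
            + Measure.dirac ((⇑f)^[0] p) := by rw [hp]; rfl
      _ = ∑ i ∈ Finset.range (m+1), Measure.dirac ((⇑f)^[i] p) := by
          rw [Finset.sum_range_succ']
  refine ⟨μ, hprob, ⟨hmeas, hmap⟩, ?_⟩
  intro r
  have hrm : (⇑f)^[r] p = (⇑f)^[r % M] p := (hper.iterate_mod_apply r).symm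
  rw [happ, hrm]
  have hmem : r % M ∈ Finset.range M := Finset.mem_range.mpr (Nat.mod_lt r hM)
  have hle : (1 : ℝ≥0∞) ≤ ∑ i ∈ Finset.range M, Measure.dirac ((⇑f)^[i] p) {(⇑f)^[r % M] p} := by
    refine le_trans ?_ (Finset.single_le_sum (f := fun i => Measure.dirac ((⇑f)^[i] p) {(⇑f)^[r % M] p}) (fun _ _ => zero_le) hmem)
    rw [Measure.dirac_apply_of_mem (show (⇑f)^[r % M] p ∈ ({(⇑f)^[r % M] p} : Set X) from rfl)]
  calc (M : ℝ≥0∞)⁻¹ = (M : ℝ≥0∞)⁻¹ * 1 := (mul_one _).symm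
    _ ≤ _ := by exact mul_le_mul_right hle _


end aux2

section aux3
variable [MetricSpace X] [MeasurableSpace X] [BorelSpace X]

lemma gamma_half_singleton (f : X ≃ₜ X) {δ : ℝ} (hδ : 0 < δ)
    (hsme : StrongMeasExpansiveWith f δ) (p : X) (M : ℕ) (hM : 1 ≤ M)
    (hp : (⇑f)^[M] p = p) (r : ℕ) :
    ∀ z ∈ Gamma f (δ/2) ((⇑f)^[r] p), z = (⇑f)^[r] p := by
  intro z hz
  by_contra hne
  obtain ⟨μ, hprob, hpres, hatom⟩ := periodic_measure f p M hM hp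
  set q := (⇑f)^[r] p with hqdef
  have hq : μ (Gamma f δ q) = μ {q} := hsme μ hprob hpres q
  have hz' : μ (Gamma f δ z) = μ {z} := hsme μ hprob hpres z
  have hzq : ∀ i : ℤ, dist (zit f i q) (zit f i z) ≤ δ/2 := hz
  have hsub1 : ({q, z} : Set X) ⊆ Gamma f δ q := by
    rintro w (rfl | rfl)
    · intro i; simpa using hδ.le
    · intro i; linarith [hzq i]
  have hsub2 : ({q} : Set X) ⊆ Gamma f δ z := by
    rintro w rfl
    intro i
    rw [dist_comm]
    linarith [hzq i]
  have hMinv : (0 : ℝ≥0∞) < (M : ℝ≥0∞)⁻¹ :=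
    ENNReal.inv_pos.mpr (ENNReal.natCast_ne_top M)
  have hzpos : (M : ℝ≥0∞)⁻¹ ≤ μ {z} := by
    calc (M : ℝ≥0∞)⁻¹ ≤ μ {q} := hatom r
      _ ≤ μ (Gamma f δ z) := measure_mono hsub2
      _ = μ {z} := hz'
  have hpair : μ {q} + μ {z} ≤ μ {q} + 0 := by
    rw [add_zero]
    calc μ {q} + μ {z} = μ ({q} ∪ {z}) :=
          (measure_union (Set.disjoint_singleton.mpr fun h => hne h.symm)
            (measurableSet_singleton z)).symm
      _ = μ ({q, z} : Set X) := by rw [Set.singleton_union]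
      _ ≤ μ (Gamma f δ q) := measure_mono hsub1
      _ = μ {q} := hq
  have hz0 : μ {z} = 0 :=
    le_antisymm ((ENNReal.add_le_add_iff_left (measure_ne_top μ {q})).mp hpair) (zero_le)
  rw [hz0] at hzpos
  exact absurd hzpos (by simp)

end aux3

theorem strongMeasExpansive_local_stable_in_stable
    [MetricSpace X] [CompactSpace X] [MeasurableSpace X] [BorelSpace X]
    (f : X ≃ₜ X) (δ : ℝ) (hδ : 0 < δ) (hsme : StrongMeasExpansiveWith f δ)
    (hsh : ShadowingZ f) :
    ∀ p : X, IsPeriodicPt' (⇑f) p → ∀ y : X,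
      (∀ i : ℕ, dist ((⇑f)^[i] y) ((⇑f)^[i] p) ≤ δ / 2) →
      Tendsto (fun i : ℕ => dist ((⇑f)^[i] y) ((⇑f)^[i] p)) atTop (nhds 0) := by
  intro p hper y hy
  obtain ⟨M, hM, hp⟩ : ∃ m, 1 ≤ m ∧ (⇑f)^[m] p = p := hper
  have hperiodic : Function.IsPeriodicPt (⇑f) M p := hp
  by_contra hcon
  rw [Metric.tendsto_atTop] at hcon
  push_neg at hcon
  obtain ⟨c, hc, hfreq⟩ := hcon
  set S : Set ℕ := {n | c ≤ dist ((⇑f)^[n] y) ((⇑f)^[n] p)} with hSdef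
  have hfreq' : ∃ᶠ n in atTop, n ∈ S := by
    rw [frequently_atTop]
    intro a
    obtain ⟨n, hn, h⟩ := hfreq a
    rw [Real.dist_eq, sub_zero, abs_of_nonneg dist_nonneg] at h
    exact ⟨n, hn, h⟩
  have hne : (atTop ⊓ 𝓟 S).NeBot := by
    rw [← frequently_iff_neBot]; exact hfreq'
  let U : Ultrafilter ℕ := Ultrafilter.of (atTop ⊓ 𝓟 S)
  have hU : ↑U ≤ atTop ⊓ 𝓟 S := Ultrafilter.of_le _
  have hUtop : ↑U ≤ (atTop : Filter ℕ) := hU.trans inf_le_left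
  have hUS : ∀ᶠ n in ↑U, c ≤ dist ((⇑f)^[n] y) ((⇑f)^[n] p) :=
    hU.trans inf_le_right (Filter.mem_principal_self S)
  have hcover : (⋃ i ∈ ((Finset.range M : Finset ℕ) : Set ℕ),
      {n : ℕ | (⇑f)^[n] p = (⇑f)^[i] p}) ∈ U := by
    have heq : (⋃ i ∈ ((Finset.range M : Finset ℕ) : Set ℕ),
        {n : ℕ | (⇑f)^[n] p = (⇑f)^[i] p}) = Set.univ := by
      ext n
      simp only [Set.mem_iUnion, Set.mem_univ, iff_true, Finset.coe_range, Set.mem_Iio,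
        Set.mem_setOf_eq]
      exact ⟨n % M, Nat.mod_lt n hM, (hperiodic.iterate_mod_apply n).symm⟩
    rw [heq]
    exact Filter.univ_mem
  obtain ⟨r, hrM, hTr⟩ :=
    (Ultrafilter.finite_biUnion_mem_iff (Finset.range M).finite_toSet).mp hcover
  set q := (⇑f)^[r] p with hqdef
  obtain ⟨z, -, hzle⟩ := isCompact_univ.ultrafilter_le_nhds
    (U.map fun n => (⇑f)^[n] y) (by rw [le_principal_iff]; exact Filter.univ_mem)
  have hz : Tendsto (fun n => (⇑f)^[n] y) ↑U (𝓝 z) := hzle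
  have hTr' : ∀ᶠ n in ↑U, (⇑f)^[n] p = q := hTr
  have hzG : z ∈ Gamma f (δ/2) q := by
    intro j
    have hev1 : ∀ᶠ n : ℕ in ↑U, (0 : ℤ) ≤ (n : ℤ) + j :=
      hUtop (Filter.eventually_atTop.mpr ⟨(-j).toNat, fun n hn => by omega⟩)
    have hev : ∀ᶠ n in ↑U, dist (zit f j q) (zit f j ((⇑f)^[n] y)) ≤ δ/2 := by
      filter_upwards [hev1, hTr'] with n h1 h2
      rw [← h2, zit_iterate f j n p h1, zit_iterate f j n y h1]
      have := hy (((n : ℤ) + j).toNat)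
      rw [dist_comm] at this
      exact this
    have htend : Tendsto (fun n => dist (zit f j q) (zit f j ((⇑f)^[n] y))) ↑U
        (𝓝 (dist (zit f j q) (zit f j z))) :=
      tendsto_const_nhds.dist (((continuous_zit f j).tendsto z).comp hz)
    exact le_of_tendsto htend hev
  have hzq : z = q := gamma_half_singleton f hδ hsme p M hM hp r z hzG
  have hdist : c ≤ dist z q := by
    have htend : Tendsto (fun n => dist ((⇑f)^[n] y) q) ↑U (𝓝 (dist z q)) :=
      hz.dist tendsto_const_nhds
    have hev : ∀ᶠ n in ↑U, c ≤ dist ((⇑f)^[n] y) q := by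
      filter_upwards [hUS, hTr'] with n h1 h2
      rw [← h2]; exact h1
    exact ge_of_tendsto htend hev
  rw [hzq, dist_self] at hdist
  linarith
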